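/- Let G be a properly edge-colored graph with no rainbow path of length k+1 and P* = v_0…v_k a rainbow path of length k with colors c_i. If v_0 v_i ∈ E(G) for some 2 ≤ i ≤ k and c(v_0 v_i) ∉ {c_1,…,c_k}, then v_{i-1} is the terminal vertex of some rainbow path of length k on the vertex set {v_0,…,v_k}; explicitly, v_{i-1} v_{i-2} … v_0 v_i v_{i+1} … v_k is a rainbow path. -/

import Mathlib

open SimpleGraph

/-- A proper edge-coloring: edges sharing a vertex receive distinct colors. -/
def ProperEdgeColoring {V : Type*} (G : SimpleGraph V) (c : Sym2 V → ℕ) : Prop :=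
  ∀ ⦃u v w : V⦄, G.Adj u v → G.Adj u w → v ≠ w → c s(u, v) ≠ c s(u, w)

/-- Any walk of length at least `n + 1` splits as a walk of length `n`, an edge,
and a remaining walk. -/
lemma walk_split {V : Type*} {G : SimpleGraph V} :
    ∀ (n : ℕ) {u v : V} (p : G.Walk u v), n + 1 ≤ p.length →
      ∃ (x y : V) (p₁ : G.Walk u x) (h : G.Adj x y) (p₂ : G.Walk y v),
        p = p₁.append (SimpleGraph.Walk.cons h p₂) ∧ p₁.length = n := by
  intro n
  induction n with
  | zero =>
    intro u v p hl
    cases p with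
    | nil => simp at hl
    | cons h q => exact ⟨_, _, .nil, h, q, rfl, rfl⟩
  | succ n ih =>
    intro u v p hl
    cases p with
    | nil => simp at hl
    | cons h q =>
      obtain ⟨x, y, p₁, h', p₂, rfl, hlen⟩ := ih q (by simpa using hl)
      exact ⟨x, y, .cons h p₁, h', p₂, rfl, by simp [hlen]⟩

/-- Claim `new_edge`. If `p = v_0 … v_k` is a rainbow path
in a properly edge-colored graph, `v_0 v_i ∈ E(G)` for some `2 ≤ i ≤ k`, and
`c(v_0 v_i)` is not a color of `p`, then `v_{i-1}` is a terminal vertex of a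
rainbow path of length `k` on the vertex set `{v_0,…,v_k}` (namely
`v_{i-1} v_{i-2} … v_0 v_i v_{i+1} … v_k`). -/
theorem new_edge_terminal {V : Type*} [DecidableEq V]
    (G : SimpleGraph V) (c : Sym2 V → ℕ) (k : ℕ)
    (hproper : ProperEdgeColoring G c)
    (v₀ vₖ : V) (p : G.Walk v₀ vₖ) (hp : p.IsPath) (hlen : p.length = k)
    (hrb : (p.edges.map c).Nodup)
    (i : ℕ) (hi₂ : 2 ≤ i) (hik : i ≤ k)
    (hadj : G.Adj v₀ (p.getVert i))
    (hnew : c s(v₀, p.getVert i) ∉ p.edges.map c) :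
    ∃ q : G.Walk (p.getVert (i - 1)) vₖ,
      q.IsPath ∧ q.length = k ∧ q.support.toFinset = p.support.toFinset ∧
      (q.edges.map c).Nodup := by
  obtain ⟨x, y, p₁, h', p₂, rfl, hl1⟩ :=
    walk_split (i - 1) p (by omega)
  have hx : (p₁.append (.cons h' p₂)).getVert (i - 1) = x := by
    rw [Walk.getVert_append, hl1, if_neg (by omega), Nat.sub_self, Walk.getVert_zero]
  have h1 : i - (i - 1) = 1 := by omega
  have hy : (p₁.append (.cons h' p₂)).getVert i = y := by
    rw [Walk.getVert_append, hl1, if_neg (by omega), h1, Walk.getVert_cons_succ,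
      Walk.getVert_zero]
  rw [hy] at hadj hnew
  rw [hx]
  have hperm : (p₁.reverse.append (.cons hadj p₂)).support.Perm
      ((p₁.append (.cons h' p₂)).support) := by
    rw [Walk.support_append, Walk.support_append, Walk.support_reverse]
    simp only [Walk.support_cons, List.tail_cons]
    exact (p₁.support.reverse_perm).append_right _
  refine ⟨p₁.reverse.append (.cons hadj p₂), ?_, ?_, ?_, ?_⟩
  · rw [Walk.isPath_def]
    exact hperm.nodup_iff.mpr hp.support_nodup
  · simp only [Walk.length_append, Walk.length_cons] at hlen ⊢
    simp [Walk.length_reverse]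
    omega
  · exact List.toFinset_eq_of_perm _ _ hperm
  · rw [Walk.edges_append, Walk.edges_reverse, Walk.edges_cons]
    rw [Walk.edges_append, Walk.edges_cons] at hrb hnew
    simp only [List.map_append, List.map_cons, List.map_reverse, List.nodup_append,
      List.nodup_reverse, List.nodup_cons, List.mem_append, List.mem_cons,
      List.mem_reverse, List.disjoint_left, not_or] at hrb hnew ⊢
    obtain ⟨hA, ⟨haB, hB⟩, hdisj⟩ := hrb
    obtain ⟨hb1, hb2, hb3⟩ := hnew
    refine ⟨hA, ⟨hb3, hB⟩, ?_⟩
    intro z hz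
    have := hdisj z hz
    intro b hb h
    rcases hb with rfl | hb
    · exact hb1 (h ▸ hz)
    · exact this b (Or.inr hb) h
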